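/- arXiv:1607.01993 — 3 statements merged into one kernel-verified Lean document; each statement's English description precedes it below -/
import Mathlib

section
/- Let (B, S) be a 3-partition instance with S = (k_1, …, k_{3m}), Σ k_j = mB, and B/4 < k_j < B/2 for all j, and let Ã_{B,S} and B̃_{B,S} be as constructed from it. Then the biabduction problem (Ã_{B,S}, B̃_{B,S}) has a solution (i.e., there exist quantifier-free symbolic heaps X, Y with Ã_{B,S}*X satisfiable and Ã_{B,S}*X ⊨ B̃_{B,S}*Y) if and only if there exists a complete 3-partition of S with respect to B, i.e., a partition of {1,…,3m} into m triples each of whose k-values sums to B. -/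
/-! ## Array separation logic (ASL): syntax and stack-heap semantics -/

/-- Terms of array separation logic: variables (named by naturals), constants,
addition, and multiplication by a constant. -/
inductive Trm : Type where
  | var : ℕ → Trm
  | const : ℕ → Trm
  | add : Trm → Trm → Trm
  | smul : ℕ → Trm → Trm

/-- A stack maps variables to naturals. -/
abbrev Stack := ℕ → ℕ

/-- Evaluation of terms under a stack. -/
def Trm.eval (s : Stack) : Trm → ℕ
  | .var x => s x
  | .const n => n
  | .add t u => t.eval s + u.eval s
  | .smul n t => n * t.eval s

/-- Variables occurring in a term. -/
def Trm.vars : Trm → Set ℕ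
  | .var x => {x}
  | .const _ => ∅
  | .add t u => t.vars ∪ u.vars
  | .smul _ t => t.vars

/-- Pure formulas: conjunctions of atomic arithmetic constraints. -/
inductive PureF : Type where
  | tru : PureF
  | eq : Trm → Trm → PureF
  | ne : Trm → Trm → PureF
  | le : Trm → Trm → PureF
  | lt : Trm → Trm → PureF
  | and : PureF → PureF → PureF

/-- Satisfaction of pure formulas (depends only on the stack). -/
def PureF.sat (s : Stack) : PureF → Prop
  | .tru => True
  | .eq t u => t.eval s = u.eval s
  | .ne t u => t.eval s ≠ u.eval s
  | .le t u => t.eval s ≤ u.eval s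
  | .lt t u => t.eval s < u.eval s
  | .and p q => p.sat s ∧ q.sat s

def PureF.vars : PureF → Set ℕ
  | .tru => ∅
  | .eq t u => t.vars ∪ u.vars
  | .ne t u => t.vars ∪ u.vars
  | .le t u => t.vars ∪ u.vars
  | .lt t u => t.vars ∪ u.vars
  | .and p q => p.vars ∪ q.vars

/-- The (top-level) terms occurring in a pure formula. -/
def PureF.trms : PureF → List Trm
  | .tru => []
  | .eq t u => [t, u]
  | .ne t u => [t, u]
  | .le t u => [t, u]
  | .lt t u => [t, u]
  | .and p q => p.trms ++ q.trms

/-- The conjuncts of a pure formula. -/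
def PureF.conjuncts : PureF → List PureF
  | .and p q => p.conjuncts ++ q.conjuncts
  | p => [p]

/-- Finite conjunction. -/
def bigAnd : List PureF → PureF
  | [] => .tru
  | p :: ps => .and p (bigAnd ps)

/-- Spatial formulas: `emp`, points-to, arrays, and separating conjunction. -/
inductive Spatial : Type where
  | emp : Spatial
  | pto : Trm → Trm → Spatial
  | arr : Trm → Trm → Spatial
  | star : Spatial → Spatial → Spatial

/-- Heaps: finite partial functions from ℕ (locations) to ℕ (values). -/
abbrev Heap := Finmap (fun _ : ℕ => ℕ)

/-- Satisfaction of spatial formulas. -/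
def Spatial.sat (s : Stack) : Spatial → Heap → Prop
  | .emp, h => h = ∅
  | .pto t u, h =>
      h.keys = {Trm.eval s t} ∧ Finmap.lookup (Trm.eval s t) h = some (Trm.eval s u)
  | .arr t u, h =>
      Trm.eval s t ≤ Trm.eval s u ∧ h.keys = Finset.Icc (Trm.eval s t) (Trm.eval s u)
  | .star F G, h =>
      ∃ h₁ h₂ : Heap, h₁.Disjoint h₂ ∧ h = h₁ ∪ h₂ ∧ F.sat s h₁ ∧ G.sat s h₂

def Spatial.vars : Spatial → Set ℕ
  | .emp => ∅
  | .pto t u => t.vars ∪ u.vars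
  | .arr t u => t.vars ∪ u.vars
  | .star F G => F.vars ∪ G.vars

/-- The (top-level) terms occurring in a spatial formula. -/
def Spatial.trms : Spatial → List Trm
  | .emp => []
  | .pto t u => [t, u]
  | .arr t u => [t, u]
  | .star F G => F.trms ++ G.trms

/-- The points-to atoms of a spatial formula, as (address, value) pairs. -/
def Spatial.ptos : Spatial → List (Trm × Trm)
  | .emp => []
  | .pto t u => [(t, u)]
  | .arr _ _ => []
  | .star F G => F.ptos ++ G.ptos

/-- The array atoms of a spatial formula, as endpoint pairs. -/
def Spatial.arrs : Spatial → List (Trm × Trm)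
  | .emp => []
  | .pto _ _ => []
  | .arr t u => [(t, u)]
  | .star F G => F.arrs ++ G.arrs

/-- The arrays of the array abstraction `⟨A⟩`: each points-to `c ↦ d` is
replaced by the single-cell array `array(c,c)`. -/
def Spatial.absArrays : Spatial → List (Trm × Trm)
  | .emp => []
  | .pto t _ => [(t, t)]
  | .arr t u => [(t, u)]
  | .star F G => F.absArrays ++ G.absArrays

/-- Finite separating conjunction. -/
def bigStar : List Spatial → Spatial
  | [] => .emp
  | F :: Fs => .star F (bigStar Fs)

/-- Quantifier-free symbolic heaps `Π : F`. -/
structure SymHeap : Type where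
  pure : PureF
  spatial : Spatial

/-- Satisfaction of quantifier-free symbolic heaps. -/
def SymHeap.sat (s : Stack) (h : Heap) (A : SymHeap) : Prop :=
  A.pure.sat s ∧ A.spatial.sat s h

def SymHeap.vars (A : SymHeap) : Set ℕ := A.pure.vars ∪ A.spatial.vars

/-- All (top-level) terms occurring in a symbolic heap. -/
def SymHeap.trms (A : SymHeap) : List Trm := A.pure.trms ++ A.spatial.trms

/-- Lifting `*` to symbolic heaps: conjoin pure parts, `*`-conjoin spatial parts. -/
def SymHeap.star (A X : SymHeap) : SymHeap :=
  ⟨.and A.pure X.pure, .star A.spatial X.spatial⟩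

/-- Satisfiability of a symbolic heap. -/
def SymHeap.Satisfiable (A : SymHeap) : Prop := ∃ (s : Stack) (h : Heap), A.sat s h

/-- Semantic entailment between quantifier-free symbolic heaps. -/
def Entails (A B : SymHeap) : Prop := ∀ (s : Stack) (h : Heap), A.sat s h → B.sat s h

/-- Existentially quantified symbolic heaps `∃ z⃗. Π : F`. -/
structure QSymHeap : Type where
  bound : List ℕ
  body : SymHeap

/-- Satisfaction of quantified symbolic heaps: some extension of the stack on the
bound variables satisfies the body. -/
def QSymHeap.sat (s : Stack) (h : Heap) (B : QSymHeap) : Prop :=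
  ∃ s' : Stack, (∀ x : ℕ, x ∉ B.bound → s' x = s x) ∧ B.body.sat s' h

/-! ## The arithmetic encodings γ, β, φ, ψ₁, ψ₂, χ (interpreted over stacks) -/

/-- `s ⊨ γ(A)`: the Presburger satisfiability encoding of `A`, i.e. the pure part
of `A` together with well-definedness and pairwise disjointness of the arrays of
the array abstraction `⟨A⟩`. -/
def gammaSat (A : SymHeap) (s : Stack) : Prop :=
  A.pure.sat s ∧
  (∀ p ∈ A.spatial.absArrays, Trm.eval s p.1 ≤ Trm.eval s p.2) ∧
  A.spatial.absArrays.Pairwise (fun p q =>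
    Trm.eval s p.2 < Trm.eval s q.1 ∨ Trm.eval s q.2 < Trm.eval s p.1)

/-- `s ⊨ β(A,B)`. -/
def betaSat (A B : SymHeap) (s : Stack) : Prop :=
  gammaSat A s ∧ gammaSat B s ∧
  (∀ p ∈ B.spatial.ptos, ∀ q ∈ A.spatial.arrs,
      Trm.eval s p.1 < Trm.eval s q.1 ∨ Trm.eval s p.1 > Trm.eval s q.2) ∧
  (∀ p ∈ A.spatial.ptos, ∀ q ∈ B.spatial.ptos,
      Trm.eval s p.1 ≠ Trm.eval s q.1 ∨ Trm.eval s p.2 = Trm.eval s q.2)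

/-- The term set `Terms(A,B)`: all terms occurring in `A` and `B`, together with
the successor terms `b_i + 1`, `d_i + 1` (array right endpoints) and
`t_i + 1`, `v_i + 1` (points-to addresses). -/
def termSet (A B : SymHeap) : List Trm :=
  A.trms ++ B.trms ++
  (A.spatial.arrs.map fun p => Trm.add p.2 (Trm.const 1)) ++
  (B.spatial.arrs.map fun p => Trm.add p.2 (Trm.const 1)) ++
  (A.spatial.ptos.map fun p => Trm.add p.1 (Trm.const 1)) ++
  (B.spatial.ptos.map fun p => Trm.add p.1 (Trm.const 1))

/-- A solution seed for the biabduction instance `(A,B)`. -/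
def IsSolutionSeed (A B : SymHeap) (Δ : PureF) : Prop :=
  (∃ s : Stack, Δ.sat s) ∧
  (∀ s : Stack, Δ.sat s → betaSat A B s) ∧
  (∀ δ ∈ Δ.conjuncts, ∃ t ∈ termSet A B, ∃ u ∈ termSet A B,
      δ = PureF.lt t u ∨ δ = PureF.eq t u) ∧
  (∀ t ∈ termSet A B, ∀ u ∈ termSet A B, ∃ δ ∈ Δ.conjuncts,
      δ = PureF.lt t u ∨ δ = PureF.lt u t ∨ δ = PureF.eq t u)

/-- The (quantifier-free) biabduction problem `(A,B)` has a solution. -/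
def HasBiabductionSolution (A B : SymHeap) : Prop :=
  ∃ X Y : SymHeap, (A.star X).Satisfiable ∧ Entails (A.star X) (B.star Y)

/-- `s ⊨ φ(A,B)` (over the array abstractions of `A` and `B`). -/
def phiSat (A B : SymHeap) (s : Stack) : Prop :=
  ∃ x : ℕ,
    (∃ p ∈ A.spatial.absArrays, Trm.eval s p.1 ≤ x ∧ x ≤ Trm.eval s p.2) ∧
    ∀ q ∈ B.spatial.absArrays, x < Trm.eval s q.1 ∨ x > Trm.eval s q.2

/-- `s ⊨ ψ₁(A,B)`: some points-to address of `B` is covered by an array of `A`. -/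
def psi1Sat (A B : SymHeap) (s : Stack) : Prop :=
  ∃ p ∈ A.spatial.arrs, ∃ q ∈ B.spatial.ptos,
    Trm.eval s p.1 ≤ Trm.eval s q.1 ∧ Trm.eval s q.1 ≤ Trm.eval s p.2

/-- `s ⊨ ψ₂(A,B)`: some pointers of `A` and `B` share an address but disagree on
their contents. -/
def psi2Sat (A B : SymHeap) (s : Stack) : Prop :=
  ∃ p ∈ A.spatial.ptos, ∃ q ∈ B.spatial.ptos,
    Trm.eval s p.1 = Trm.eval s q.1 ∧ Trm.eval s p.2 ≠ Trm.eval s q.2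

/-- `s ⊨ χ(A, ∃z⃗.Q)`. -/
def chiSat (A : SymHeap) (zs : List ℕ) (Q : SymHeap) (s : Stack) : Prop :=
  gammaSat A s ∧
  ∀ s' : Stack, (∀ x : ℕ, x ∉ zs → s' x = s x) →
    (¬ gammaSat Q s' ∨ phiSat A Q s' ∨ phiSat Q A s' ∨
      psi1Sat A Q s' ∨ psi2Sat A Q s')

/-! ### The 3-partition reduction. Variables: `d_{i+1}` is `var i` for `i ∈ [0,m]`,
and `a_{j+1}` is `var (m+1+j)` for `j ∈ [0,3m)`. -/

/-- The symbolic heap `A_{B,S}`: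
`⋀_{i=1}^{m} (d_{i+1} = dᵢ + B + 1) ∧ ⋀_{j=1}^{3m} (d₁ ≤ aⱼ ∧ aⱼ + kⱼ < d_{m+1})
 : ⊛_{i=1}^{m+1} array(dᵢ,dᵢ) * ⊛_{j=1}^{3m} array(aⱼ+1, aⱼ+kⱼ)`. -/
def heapABS (m B : ℕ) (k : Fin (3 * m) → ℕ) : SymHeap :=
  ⟨PureF.and
      (bigAnd (List.ofFn fun i : Fin m =>
        PureF.eq (Trm.var (i.1 + 1)) (Trm.add (Trm.var i.1) (Trm.const (B + 1)))))
      (bigAnd (List.ofFn fun j : Fin (3 * m) =>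
        PureF.and (PureF.le (Trm.var 0) (Trm.var (m + 1 + j.1)))
          (PureF.lt (Trm.add (Trm.var (m + 1 + j.1)) (Trm.const (k j))) (Trm.var m)))),
   Spatial.star
      (bigStar (List.ofFn fun i : Fin (m + 1) => Spatial.arr (Trm.var i.1) (Trm.var i.1)))
      (bigStar (List.ofFn fun j : Fin (3 * m) =>
        Spatial.arr (Trm.add (Trm.var (m + 1 + j.1)) (Trm.const 1))
          (Trm.add (Trm.var (m + 1 + j.1)) (Trm.const (k j)))))⟩

/-- The symbolic heap `Ã_{B,S}`:
`⋀_{i=1}^{m} (d_{i+1} = dᵢ + B + 1) : ⊛_{i=1}^{m+1} array(dᵢ,dᵢ)`. -/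
def heapAtil (m B : ℕ) : SymHeap :=
  ⟨bigAnd (List.ofFn fun i : Fin m =>
      PureF.eq (Trm.var (i.1 + 1)) (Trm.add (Trm.var i.1) (Trm.const (B + 1)))),
   bigStar (List.ofFn fun i : Fin (m + 1) => Spatial.arr (Trm.var i.1) (Trm.var i.1))⟩

/-- The symbolic heap `B̃_{B,S}`:
`⋀_{i=1}^{m} (d_{i+1} > dᵢ) ∧ ⋀_{j=1}^{3m} (d₁ ≤ aⱼ ∧ aⱼ + kⱼ < d_{m+1})
 : ⊛_{i=1}^{m+1} array(dᵢ,dᵢ) * ⊛_{j=1}^{3m} array(aⱼ+1, aⱼ+kⱼ)`. -/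
def heapBtil (m : ℕ) (k : Fin (3 * m) → ℕ) : SymHeap :=
  ⟨PureF.and
      (bigAnd (List.ofFn fun i : Fin m => PureF.lt (Trm.var i.1) (Trm.var (i.1 + 1))))
      (bigAnd (List.ofFn fun j : Fin (3 * m) =>
        PureF.and (PureF.le (Trm.var 0) (Trm.var (m + 1 + j.1)))
          (PureF.lt (Trm.add (Trm.var (m + 1 + j.1)) (Trm.const (k j))) (Trm.var m)))),
   Spatial.star
      (bigStar (List.ofFn fun i : Fin (m + 1) => Spatial.arr (Trm.var i.1) (Trm.var i.1)))
      (bigStar (List.ofFn fun j : Fin (3 * m) =>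
        Spatial.arr (Trm.add (Trm.var (m + 1 + j.1)) (Trm.const 1))
          (Trm.add (Trm.var (m + 1 + j.1)) (Trm.const (k j)))))⟩

/-- A complete 3-partition of `S = (k₁,…,k_{3m})` w.r.t. `B`: a partition of the
indices into `m` groups of three, each of whose `k`-values sums to `B`. -/
def HasThreePartition (m B : ℕ) (k : Fin (3 * m) → ℕ) : Prop :=
  ∃ f : Fin (3 * m) → Fin m, ∀ i : Fin m,
    (Finset.univ.filter fun j => f j = i).card = 3 ∧
    ∑ j ∈ Finset.univ.filter (fun j => f j = i), k j = B

section Infra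

lemma bigAnd_sat (s : Stack) (L : List PureF) : (bigAnd L).sat s ↔ ∀ p ∈ L, p.sat s := by
  induction L with
  | nil => simp [bigAnd, PureF.sat]
  | cons p L ih => simp [bigAnd, PureF.sat, ih]

lemma finmap_disjoint_iff {h1 h2 : Heap} : h1.Disjoint h2 ↔ Disjoint h1.keys h2.keys := by
  constructor
  · intro h
    rw [Finset.disjoint_left]
    intro a ha hb
    exact h a (Finmap.mem_keys.mp ha) (Finmap.mem_keys.mp hb)
  · intro h a ha hb
    exact Finset.disjoint_left.mp h (Finmap.mem_keys.mpr ha) (Finmap.mem_keys.mpr hb)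

/-- A heap with key set `S`, each key mapped to `0`. -/
def heapOn (S : Finset ℕ) : Heap :=
  ⟨S.val.map fun a => ⟨a, 0⟩, by
    rw [← Multiset.nodup_keys]
    have : Multiset.keys (S.val.map fun a => (⟨a, 0⟩ : Sigma fun _ : ℕ => ℕ)) = S.val := by
      simp [Multiset.keys, Multiset.map_map, Function.comp]
    rw [this]; exact S.nodup⟩

lemma keys_heapOn (S : Finset ℕ) : (heapOn S).keys = S := by
  apply Finset.val_injective
  show Multiset.keys _ = S.val
  simp [heapOn, Multiset.keys, Multiset.map_map, Function.comp]

end Infra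
section StarLemmas

/-- The interval denoted by a pair of endpoint terms. -/
def IccOf (s : Stack) (p : Trm × Trm) : Finset ℕ := Finset.Icc (p.1.eval s) (p.2.eval s)

/-- The union of the intervals of a list of endpoint pairs. -/
def foldIcc (s : Stack) (L : List (Trm × Trm)) : Finset ℕ :=
  L.foldr (fun p acc => IccOf s p ∪ acc) ∅

lemma mem_foldIcc {s : Stack} {L : List (Trm × Trm)} {x : ℕ} :
    x ∈ foldIcc s L ↔ ∃ p ∈ L, x ∈ IccOf s p := by
  induction L with
  | nil => simp [foldIcc]
  | cons p L ih =>
    have h1 : foldIcc s (p :: L) = IccOf s p ∪ foldIcc s L := rfl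
    rw [h1, Finset.mem_union, ih]
    simp

lemma empty_disjoint (h : Heap) : (∅ : Heap).Disjoint h := by
  intro x hx; exact absurd hx Finmap.notMem_empty

lemma starArr_elim (s : Stack) (L : List (Trm × Trm)) (h : Heap)
    (hs : (bigStar (L.map fun p => Spatial.arr p.1 p.2)).sat s h) :
    (∀ p ∈ L, p.1.eval s ≤ p.2.eval s) ∧
    L.Pairwise (fun p q => Disjoint (IccOf s p) (IccOf s q)) ∧
    h.keys = foldIcc s L := by
  induction L generalizing h with
  | nil =>
    simp only [List.map_nil, bigStar, Spatial.sat] at hs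
    subst hs
    simp [foldIcc, Finmap.keys_empty]
  | cons p L ih =>
    obtain ⟨h₁, h₂, hdisj, rfl, h1sat, h2sat⟩ := hs
    obtain ⟨hle, hkeys⟩ := h1sat
    obtain ⟨ihle, ihpw, ihkeys⟩ := ih h₂ h2sat
    have hdk : Disjoint h₁.keys h₂.keys := finmap_disjoint_iff.mp hdisj
    rw [hkeys, ihkeys] at hdk
    refine ⟨?_, ?_, ?_⟩
    · intro q hq
      rcases List.mem_cons.mp hq with rfl | hq
      · exact hle
      · exact ihle _ hq
    · refine List.Pairwise.cons ?_ ihpw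
      intro q hq
      refine Finset.disjoint_left.mpr fun x hx hxq => ?_
      exact Finset.disjoint_left.mp hdk hx (mem_foldIcc.mpr ⟨q, hq, hxq⟩)
    · rw [Finmap.keys_union, hkeys, ihkeys]; rfl

lemma starArr_mk (s : Stack) (L : List (Trm × Trm))
    (hle : ∀ p ∈ L, p.1.eval s ≤ p.2.eval s)
    (hpw : L.Pairwise (fun p q => Disjoint (IccOf s p) (IccOf s q))) :
    ∃ h : Heap, (bigStar (L.map fun p => Spatial.arr p.1 p.2)).sat s h ∧
      h.keys = foldIcc s L := by
  induction L with
  | nil => exact ⟨∅, rfl, by simp [foldIcc, Finmap.keys_empty]⟩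
  | cons p L ih =>
    obtain ⟨hpL, hpw'⟩ := List.pairwise_cons.mp hpw
    obtain ⟨h₂, h2sat, h2keys⟩ := ih (fun q hq => hle q (List.mem_cons_of_mem _ hq)) hpw'
    refine ⟨heapOn (IccOf s p) ∪ h₂, ?_, ?_⟩
    · refine ⟨heapOn (IccOf s p), h₂, ?_, rfl, ⟨hle p List.mem_cons_self, keys_heapOn _⟩, h2sat⟩
      rw [finmap_disjoint_iff, keys_heapOn, h2keys]
      refine Finset.disjoint_left.mpr fun x hx hxf => ?_
      obtain ⟨q, hq, hxq⟩ := mem_foldIcc.mp hxf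
      exact Finset.disjoint_left.mp (hpL q hq) hx hxq
    · rw [Finmap.keys_union, keys_heapOn, h2keys]; rfl

lemma star_append (s : Stack) (A : List Spatial) (C : List Spatial) (h : Heap) :
    (bigStar (A ++ C)).sat s h ↔ (Spatial.star (bigStar A) (bigStar C)).sat s h := by
  induction A generalizing h with
  | nil =>
    simp only [List.nil_append, bigStar]
    constructor
    · intro hs
      exact ⟨∅, h, empty_disjoint h, (Finmap.empty_union).symm, rfl, hs⟩
    · rintro ⟨h₁, h₂, _, rfl, rfl, hs⟩
      rwa [Finmap.empty_union]
  | cons a A ih =>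
    simp only [List.cons_append, bigStar]
    constructor
    · rintro ⟨h₁, h₂, hd, rfl, ha, hs⟩
      obtain ⟨h₃, h₄, hd', rfl, hA, hC⟩ := (ih h₂).mp hs
      rw [Finmap.disjoint_union_right] at hd
      refine ⟨h₁ ∪ h₃, h₄, ?_, ?_, ⟨h₁, h₃, hd.1, rfl, ha, hA⟩, hC⟩
      · rw [Finmap.disjoint_union_left]; exact ⟨hd.2, hd'⟩
      · rw [Finmap.union_assoc]
    · rintro ⟨h₁, h₂, hd, rfl, ⟨h₃, h₄, hd', rfl, ha, hA⟩, hC⟩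
      rw [Finmap.disjoint_union_left] at hd
      refine ⟨h₃, h₄ ∪ h₂, ?_, ?_, ha, (ih _).mpr ⟨h₄, h₂, hd.2, rfl, hA, hC⟩⟩
      · rw [Finmap.disjoint_union_right]; exact ⟨hd', hd.1⟩
      · rw [Finmap.union_assoc]

end StarLemmas
section PureUnfold

lemma atil_pure_sat {m B : ℕ} {s : Stack} :
    (heapAtil m B).pure.sat s ↔ ∀ i : Fin m, s (i.1 + 1) = s i.1 + (B + 1) := by
  show (bigAnd _).sat s ↔ _
  rw [bigAnd_sat]
  constructor
  · intro h i
    have := h _ (List.mem_ofFn.mpr ⟨i, rfl⟩)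
    simpa [PureF.sat, Trm.eval] using this
  · rintro h p hp
    obtain ⟨i, rfl⟩ := List.mem_ofFn.mp hp
    simpa [PureF.sat, Trm.eval] using h i

lemma btil_pure_sat {m : ℕ} {k : Fin (3*m) → ℕ} {s : Stack} :
    (heapBtil m k).pure.sat s ↔
      (∀ i : Fin m, s i.1 < s (i.1 + 1)) ∧
      (∀ j : Fin (3*m), s 0 ≤ s (m+1+j.1) ∧ s (m+1+j.1) + k j < s m) := by
  show (PureF.and _ _).sat s ↔ _
  rw [show (PureF.and (bigAnd _) (bigAnd _)).sat s =
    ((bigAnd (List.ofFn fun i : Fin m => PureF.lt (Trm.var i.1) (Trm.var (i.1 + 1)))).sat s ∧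
     (bigAnd (List.ofFn fun j : Fin (3*m) =>
        PureF.and (PureF.le (Trm.var 0) (Trm.var (m + 1 + j.1)))
          (PureF.lt (Trm.add (Trm.var (m + 1 + j.1)) (Trm.const (k j))) (Trm.var m)))).sat s) from rfl]
  rw [bigAnd_sat, bigAnd_sat]
  constructor
  · rintro ⟨h1, h2⟩
    constructor
    · intro i
      have := h1 _ (List.mem_ofFn.mpr ⟨i, rfl⟩)
      simpa [PureF.sat, Trm.eval] using this
    · intro j
      have := h2 _ (List.mem_ofFn.mpr ⟨j, rfl⟩)
      simpa [PureF.sat, Trm.eval] using this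
  · rintro ⟨h1, h2⟩
    constructor
    · rintro p hp
      obtain ⟨i, rfl⟩ := List.mem_ofFn.mp hp
      simpa [PureF.sat, Trm.eval] using h1 i
    · rintro p hp
      obtain ⟨j, rfl⟩ := List.mem_ofFn.mp hp
      simpa [PureF.sat, Trm.eval] using h2 j

def cellPairs (m : ℕ) : List (Trm × Trm) :=
  List.ofFn fun i : Fin (m+1) => (Trm.var i.1, Trm.var i.1)

def arrPairs (m : ℕ) (k : Fin (3*m) → ℕ) : List (Trm × Trm) :=
  List.ofFn fun j : Fin (3*m) =>
    (Trm.add (Trm.var (m+1+j.1)) (Trm.const 1), Trm.add (Trm.var (m+1+j.1)) (Trm.const (k j)))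

lemma btil_spatial_eq (m : ℕ) (k : Fin (3*m) → ℕ) : (heapBtil m k).spatial
    = Spatial.star (bigStar ((cellPairs m).map fun p => Spatial.arr p.1 p.2))
        (bigStar ((arrPairs m k).map fun p => Spatial.arr p.1 p.2)) := by
  simp only [heapBtil, cellPairs, arrPairs, List.map_ofFn]
  rfl

lemma atil_spatial_eq (m B : ℕ) : (heapAtil m B).spatial
    = bigStar ((cellPairs m).map fun p => Spatial.arr p.1 p.2) := by
  simp only [heapAtil, cellPairs, List.map_ofFn]
  rfl

end PureUnfold
section Forward

lemma sgap {m B : ℕ} {s : Stack} (hA : ∀ i : Fin m, s (i.1+1) = s i.1 + (B+1)) :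
    ∀ i' i : ℕ, i < i' → i' ≤ m → s i + (B+1) ≤ s i' := by
  intro i'
  induction i' with
  | zero => omega
  | succ n ih =>
    intro i hi hm
    have hn := hA ⟨n, by omega⟩
    simp only at hn
    rcases Nat.lt_or_ge i n with h | h
    · have := ih i h (by omega); omega
    · have : i = n := by omega
      subst this; omega

lemma smono {m B : ℕ} {s : Stack} (hA : ∀ i : Fin m, s (i.1+1) = s i.1 + (B+1)) :
    ∀ i i' : ℕ, i ≤ i' → i' ≤ m → s i ≤ s i' := by
  intro i i' hle hm
  rcases Nat.lt_or_ge i i' with h | h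
  · have := sgap hA i' i h hm; omega
  · have : i = i' := by omega
    subst this; exact le_rfl

lemma forward_dir {m B : ℕ} {k : Fin (3*m) → ℕ}
    (hsum : ∑ j, k j = m * B) (hbound : ∀ j, B < 4 * k j ∧ 2 * k j < B)
    (hsol : HasBiabductionSolution (heapAtil m B) (heapBtil m k)) :
    HasThreePartition m B k := by
  rcases Nat.eq_zero_or_pos m with rfl | hm
  · refine ⟨fun j => absurd j.2 (by omega), fun i => absurd i.2 (by omega)⟩
  obtain ⟨X, Y, ⟨s, h, hsat⟩, hent⟩ := hsol
  have hBsat := hent s h hsat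
  obtain ⟨⟨hA', _⟩, _⟩ := hsat
  have hA := atil_pure_sat.mp hA'
  obtain ⟨⟨hBp', _⟩, hBsp⟩ := hBsat
  obtain ⟨hBlt, hBbounds⟩ := btil_pure_sat.mp hBp'
  obtain ⟨h₁, h₂, _, rfl, hB1, _⟩ := hBsp
  rw [btil_spatial_eq, ← star_append, ← List.map_append] at hB1
  obtain ⟨hle, hpw, hkeys⟩ := starArr_elim s _ _ hB1
  rw [List.pairwise_append] at hpw
  obtain ⟨hpwC, hpwA, hpwCA⟩ := hpw
  -- basic bounds
  have hk1 : ∀ j : Fin (3*m), 1 ≤ k j := fun j => by have := hbound j; omega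
  have hB3 : 3 ≤ B := by
    have := hbound ⟨0, by omega⟩; omega
  -- cells vs arrays disjointness
  have hcellarr : ∀ i : Fin (m+1), ∀ j : Fin (3*m),
      s i.1 ∉ Finset.Icc (s (m+1+j.1) + 1) (s (m+1+j.1) + k j) := by
    intro i j hmem
    have hd := hpwCA _ (List.mem_ofFn.mpr ⟨i, rfl⟩) _ (List.mem_ofFn.mpr ⟨j, rfl⟩)
    have h1 : s i.1 ∈ IccOf s (Trm.var i.1, Trm.var i.1) := by
      simp [IccOf, Trm.eval]
    exact Finset.disjoint_left.mp hd h1 (by simpa [IccOf, Trm.eval] using hmem)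
  have harrarr : ∀ j j' : Fin (3*m), j ≠ j' →
      Disjoint (Finset.Icc (s (m+1+j.1)+1) (s (m+1+j.1)+k j))
        (Finset.Icc (s (m+1+j'.1)+1) (s (m+1+j'.1)+k j')) := by
    intro j j' hne
    rcases lt_or_gt_of_ne hne with hlt | hlt
    · have := List.pairwise_ofFn.mp hpwA hlt
      simpa [IccOf, Trm.eval] using this
    · have := List.pairwise_ofFn.mp hpwA hlt
      exact (by simpa [IccOf, Trm.eval] using this : Disjoint _ _).symm
  -- place each array in its gap
  have hSne : ∀ j : Fin (3*m), ((Finset.range m).filter fun i => s i ≤ s (m+1+j.1)).Nonempty := by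
    intro j
    exact ⟨0, Finset.mem_filter.mpr ⟨Finset.mem_range.mpr hm, (hBbounds j).1⟩⟩
  set idx : Fin (3*m) → Fin m := fun j =>
    ⟨(((Finset.range m).filter fun i => s i ≤ s (m+1+j.1)).max' (hSne j)), by
      have := (((Finset.range m).filter fun i => s i ≤ s (m+1+j.1)).max'_mem (hSne j))
      exact Finset.mem_range.mp (Finset.mem_filter.mp this).1⟩ with hidx
  have hidx_le : ∀ j, s (idx j).1 ≤ s (m+1+j.1) := by
    intro j
    have := (((Finset.range m).filter fun i => s i ≤ s (m+1+j.1)).max'_mem (hSne j))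
    exact (Finset.mem_filter.mp this).2
  have hidx_lt : ∀ j : Fin (3*m), s (m+1+j.1) < s ((idx j).1 + 1) := by
    intro j
    rcases Nat.lt_or_ge ((idx j).1 + 1) m with hcase | hcase
    · by_contra hcon
      push_neg at hcon
      have hmem : (idx j).1 + 1 ∈ (Finset.range m).filter fun i => s i ≤ s (m+1+j.1) :=
        Finset.mem_filter.mpr ⟨Finset.mem_range.mpr hcase, hcon⟩
      have := Finset.le_max' _ _ hmem
      simp only [hidx] at this ⊢
      omega
    · have hm1 : (idx j).1 + 1 = m := by have := (idx j).2; omega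
      rw [hm1]
      have := (hBbounds j).2
      have := hk1 j
      omega
  have hidx_gap : ∀ j : Fin (3*m), s (m+1+j.1) + k j < s ((idx j).1 + 1) := by
    intro j
    by_contra hcon
    push_neg at hcon
    have hmem : s ((idx j).1 + 1) ∈ Finset.Icc (s (m+1+j.1) + 1) (s (m+1+j.1) + k j) :=
      Finset.mem_Icc.mpr ⟨hidx_lt j, hcon⟩
    exact hcellarr ⟨(idx j).1 + 1, by have := (idx j).2; omega⟩ j hmem
  have hstep : ∀ j : Fin (3*m), s ((idx j).1 + 1) = s (idx j).1 + (B+1) := fun j => hA (idx j)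
  -- per-gap capacity
  have hcap : ∀ i : Fin m, ∑ j ∈ Finset.univ.filter (fun j => idx j = i), k j ≤ B := by
    intro i
    set T := Finset.univ.filter (fun j => idx j = i) with hT
    have hdisj : ∀ j ∈ T, ∀ j' ∈ T, j ≠ j' →
        Disjoint (Finset.Icc (s (m+1+j.1)+1) (s (m+1+j.1)+k j))
          (Finset.Icc (s (m+1+j'.1)+1) (s (m+1+j'.1)+k j')) := fun j _ j' _ hne => harrarr j j' hne
    have hcardB : (T.biUnion fun j => Finset.Icc (s (m+1+j.1)+1) (s (m+1+j.1)+k j)).card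
        = ∑ j ∈ T, k j := by
      rw [Finset.card_biUnion hdisj]
      refine Finset.sum_congr rfl fun j _ => ?_
      rw [Nat.card_Icc]; omega
    have hsubs : (T.biUnion fun j => Finset.Icc (s (m+1+j.1)+1) (s (m+1+j.1)+k j))
        ⊆ Finset.Icc (s i.1 + 1) (s i.1 + B) := by
      refine Finset.biUnion_subset.mpr fun j hj => ?_
      have hji : idx j = i := (Finset.mem_filter.mp hj).2
      refine Finset.Icc_subset_Icc ?_ ?_
      · have := hidx_le j; rw [hji] at this; omega
      · have h1 := hidx_gap j
        have h2 := hstep j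
        rw [hji] at h1 h2; omega
    have := Finset.card_le_card hsubs
    rw [hcardB, Nat.card_Icc] at this
    omega
  -- total
  have htot : ∑ i : Fin m, ∑ j ∈ Finset.univ.filter (fun j => idx j = i), k j = m * B := by
    rw [Finset.sum_fiberwise]; exact hsum
  have heach : ∀ i : Fin m, ∑ j ∈ Finset.univ.filter (fun j => idx j = i), k j = B := by
    by_contra hcon
    push_neg at hcon
    obtain ⟨i0, hi0⟩ := hcon
    have hlt : ∑ j ∈ Finset.univ.filter (fun j => idx j = i0), k j < B := by
      have := hcap i0; omega
    have : ∑ i : Fin m, ∑ j ∈ Finset.univ.filter (fun j => idx j = i), k j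
        < ∑ _i : Fin m, B := by
      refine Finset.sum_lt_sum (fun i _ => hcap i) ⟨i0, Finset.mem_univ _, hlt⟩
    rw [htot, Finset.sum_const, Finset.card_univ, Fintype.card_fin, smul_eq_mul] at this
    omega
  -- cardinality of each group
  refine ⟨idx, fun i => ⟨?_, heach i⟩⟩
  set T := Finset.univ.filter (fun j => idx j = i) with hT
  set n := T.card with hn
  have h4 : n * (B + 1) ≤ 4 * B := by
    calc n * (B+1) = ∑ _j ∈ T, (B+1) := by rw [Finset.sum_const, smul_eq_mul]
    _ ≤ ∑ j ∈ T, 4 * k j := Finset.sum_le_sum fun j _ => by have := hbound j; omega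
    _ = 4 * ∑ j ∈ T, k j := by rw [Finset.mul_sum]
    _ = 4 * B := by rw [heach i]
  have h2 : 2 * B ≤ n * (B - 1) := by
    calc 2 * B = 2 * ∑ j ∈ T, k j := by rw [heach i]
    _ = ∑ j ∈ T, 2 * k j := by rw [Finset.mul_sum]
    _ ≤ ∑ _j ∈ T, (B - 1) := Finset.sum_le_sum fun j _ => by have := hbound j; omega
    _ = n * (B - 1) := by rw [Finset.sum_const, smul_eq_mul]
  have hle3 : n ≤ 3 := by
    by_contra hcon
    push_neg at hcon
    have : 4 * (B+1) ≤ n * (B+1) := Nat.mul_le_mul_right _ (by omega)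
    have := le_trans this h4
    omega
  have hge3 : 3 ≤ n := by
    by_contra hcon
    push_neg at hcon
    have : n * (B-1) ≤ 2 * (B-1) := Nat.mul_le_mul_right _ (by omega)
    have := le_trans h2 this
    omega
  omega

end Forward
section Backward

/-- Offset of array `j` within its gap, for a given 3-partition `f`. -/
def offset (m : ℕ) (k : Fin (3*m) → ℕ) (f : Fin (3*m) → Fin m) (j : Fin (3*m)) : ℕ :=
  ∑ j' ∈ Finset.univ.filter (fun j' => f j' = f j ∧ j' < j), k j'

lemma offset_add_le {m B : ℕ} {k : Fin (3*m) → ℕ} {f : Fin (3*m) → Fin m}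
    (hgroup : ∀ i : Fin m, ∑ j ∈ Finset.univ.filter (fun j => f j = i), k j = B)
    (j : Fin (3*m)) : offset m k f j + k j ≤ B := by
  have hsub : insert j (Finset.univ.filter (fun j' => f j' = f j ∧ j' < j))
      ⊆ Finset.univ.filter (fun j' => f j' = f j) := by
    intro x hx
    rcases Finset.mem_insert.mp hx with rfl | hx
    · exact Finset.mem_filter.mpr ⟨Finset.mem_univ _, rfl⟩
    · exact Finset.mem_filter.mpr ⟨Finset.mem_univ _, (Finset.mem_filter.mp hx).2.1⟩
  have hnm : j ∉ Finset.univ.filter (fun j' => f j' = f j ∧ j' < j) := by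
    simp
  have := Finset.sum_le_sum_of_subset hsub (f := k)
  rw [Finset.sum_insert hnm, hgroup (f j)] at this
  unfold offset
  omega

lemma offset_mono {m : ℕ} {k : Fin (3*m) → ℕ} {f : Fin (3*m) → Fin m}
    {j j' : Fin (3*m)} (hlt : j < j') (hf : f j = f j') :
    offset m k f j + k j ≤ offset m k f j' := by
  have hsub : insert j (Finset.univ.filter (fun x => f x = f j ∧ x < j))
      ⊆ Finset.univ.filter (fun x => f x = f j' ∧ x < j') := by
    intro x hx
    rcases Finset.mem_insert.mp hx with rfl | hx
    · exact Finset.mem_filter.mpr ⟨Finset.mem_univ _, hf, hlt⟩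
    · obtain ⟨_, h1, h2⟩ := Finset.mem_filter.mp hx
      exact Finset.mem_filter.mpr ⟨Finset.mem_univ _, h1.trans hf, h2.trans hlt⟩
  have hnm : j ∉ Finset.univ.filter (fun x => f x = f j ∧ x < j) := by simp
  have := Finset.sum_le_sum_of_subset hsub (f := k)
  rw [Finset.sum_insert hnm] at this
  unfold offset
  omega

lemma spatial_model {m B : ℕ} {k : Fin (3*m) → ℕ} {f : Fin (3*m) → Fin m} (s : Stack)
    (hA : ∀ i : Fin m, s (i.1+1) = s i.1 + (B+1))
    (hX : ∀ j : Fin (3*m), s (m+1+j.1) = s (f j).1 + offset m k f j)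
    (hoffk : ∀ j, offset m k f j + k j ≤ B)
    (hord : ∀ j j' : Fin (3*m), j < j' → f j = f j' → offset m k f j + k j ≤ offset m k f j')
    (hk1 : ∀ j, 1 ≤ k j) :
    ∃ h : Heap, (heapBtil m k).spatial.sat s h := by
  have hle : ∀ p ∈ cellPairs m ++ arrPairs m k, p.1.eval s ≤ p.2.eval s := by
    intro p hp
    rcases List.mem_append.mp hp with hp | hp
    · obtain ⟨i, rfl⟩ := List.mem_ofFn.mp hp
      exact le_rfl
    · obtain ⟨j, rfl⟩ := List.mem_ofFn.mp hp
      show s (m+1+j.1) + 1 ≤ s (m+1+j.1) + k j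
      have := hk1 j; omega
  have hpw : (cellPairs m ++ arrPairs m k).Pairwise
      (fun p q => Disjoint (IccOf s p) (IccOf s q)) := by
    rw [List.pairwise_append]
    refine ⟨?_, ?_, ?_⟩
    · rw [cellPairs, List.pairwise_ofFn]
      intro i i' hlt
      have hg := sgap hA i'.1 i.1 hlt (by omega)
      refine Finset.disjoint_left.mpr fun x hx hx' => ?_
      simp only [IccOf, Trm.eval, Finset.mem_Icc] at hx hx'
      omega
    · rw [arrPairs, List.pairwise_ofFn]
      intro j j' hlt
      have haj := hX j
      have haj' := hX j'
      refine Finset.disjoint_left.mpr fun x hx hx' => ?_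
      simp only [IccOf, Trm.eval, Finset.mem_Icc] at hx hx'
      rcases eq_or_ne (f j) (f j') with hf | hf
      · have := hord j j' hlt hf
        rw [hf] at haj
        omega
      · have h1 := hoffk j
        have h2 := hoffk j'
        rcases lt_or_gt_of_ne (fun hc => hf (Fin.ext hc)) with hff | hff
        · have := sgap hA (f j').1 (f j).1 hff (by omega)
          omega
        · have := sgap hA (f j).1 (f j').1 hff (by omega)
          omega
    · intro p hp q hq
      obtain ⟨i, rfl⟩ := List.mem_ofFn.mp hp
      obtain ⟨j, rfl⟩ := List.mem_ofFn.mp hq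
      have haj := hX j
      have h1 := hoffk j
      refine Finset.disjoint_left.mpr fun x hx hx' => ?_
      simp only [IccOf, Trm.eval, Finset.mem_Icc] at hx hx'
      rcases Nat.lt_or_ge (f j).1 i.1 with hc | hc
      · have := sgap hA i.1 (f j).1 hc (by omega)
        omega
      · have := smono hA i.1 (f j).1 hc (by omega)
        omega
  obtain ⟨h, hsat, -⟩ := starArr_mk s _ hle hpw
  rw [List.map_append] at hsat
  exact ⟨h, by rw [btil_spatial_eq]; exact (star_append s _ _ h).mp hsat⟩

/-- The bias solution `X` for the backward direction. -/
def solX (m B : ℕ) (k : Fin (3*m) → ℕ) (f : Fin (3*m) → Fin m) : SymHeap :=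
  ⟨bigAnd (List.ofFn fun j : Fin (3*m) =>
      PureF.eq (Trm.var (m+1+j.1)) (Trm.add (Trm.var (f j).1) (Trm.const (offset m k f j)))),
   bigStar (List.ofFn fun j : Fin (3*m) =>
      Spatial.arr (Trm.add (Trm.var (m + 1 + j.1)) (Trm.const 1))
        (Trm.add (Trm.var (m + 1 + j.1)) (Trm.const (k j))))⟩

lemma solX_pure_sat {m B : ℕ} {k : Fin (3*m) → ℕ} {f : Fin (3*m) → Fin m} {s : Stack} :
    (solX m B k f).pure.sat s ↔
      ∀ j : Fin (3*m), s (m+1+j.1) = s (f j).1 + offset m k f j := by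
  show (bigAnd _).sat s ↔ _
  rw [bigAnd_sat]
  constructor
  · intro h j
    have := h _ (List.mem_ofFn.mpr ⟨j, rfl⟩)
    simpa [PureF.sat, Trm.eval] using this
  · rintro h p hp
    obtain ⟨j, rfl⟩ := List.mem_ofFn.mp hp
    simpa [PureF.sat, Trm.eval] using h j

/-- The model stack used to show satisfiability of `Ã * X`. -/
def modelStack (m B : ℕ) (k : Fin (3*m) → ℕ) (f : Fin (3*m) → Fin m) : Stack := fun n =>
  if n < m + 1 then n * (B+1)
  else if hj : n - (m+1) < 3*m then
    (f ⟨n - (m+1), hj⟩).1 * (B+1) + offset m k f ⟨n - (m+1), hj⟩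
  else 0

lemma modelStack_d {m B : ℕ} {k : Fin (3*m) → ℕ} {f : Fin (3*m) → Fin m} {i : ℕ}
    (hi : i < m + 1) : modelStack m B k f i = i * (B+1) := by
  rw [modelStack, if_pos hi]

lemma modelStack_a {m B : ℕ} {k : Fin (3*m) → ℕ} {f : Fin (3*m) → Fin m} (j : Fin (3*m)) :
    modelStack m B k f (m+1+j.1) = (f j).1 * (B+1) + offset m k f j := by
  rw [modelStack, if_neg (by omega)]
  have hj : m+1+j.1 - (m+1) < 3*m := by have := j.2; omega
  rw [dif_pos hj]
  have : (⟨m+1+j.1 - (m+1), hj⟩ : Fin (3*m)) = j := by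
    apply Fin.ext
    show m+1+j.1 - (m+1) = j.1
    omega
  rw [this]

lemma backward_dir {m B : ℕ} {k : Fin (3*m) → ℕ}
    (hsum : ∑ j, k j = m * B) (hbound : ∀ j, B < 4 * k j ∧ 2 * k j < B)
    (hpart : HasThreePartition m B k) :
    HasBiabductionSolution (heapAtil m B) (heapBtil m k) := by
  obtain ⟨f, hf⟩ := hpart
  have hgroup : ∀ i : Fin m, ∑ j ∈ Finset.univ.filter (fun j => f j = i), k j = B :=
    fun i => (hf i).2
  have hk1 : ∀ j : Fin (3*m), 1 ≤ k j := fun j => by have := hbound j; omega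
  have hoffk := offset_add_le (k := k) hgroup
  refine ⟨solX m B k f, ⟨PureF.tru, Spatial.emp⟩, ?_, ?_⟩
  · -- satisfiability
    set s := modelStack m B k f with hs
    have hA : ∀ i : Fin m, s (i.1+1) = s i.1 + (B+1) := by
      intro i
      rw [hs, modelStack_d (by omega), modelStack_d (by omega)]
      ring
    have hX : ∀ j : Fin (3*m), s (m+1+j.1) = s (f j).1 + offset m k f j := by
      intro j
      rw [hs, modelStack_a, modelStack_d (by have := (f j).2; omega)]
    obtain ⟨h, hsp⟩ := spatial_model (k := k) (f := f) s hA hX hoffk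
      (fun j j' hlt hf' => offset_mono hlt hf') hk1
    refine ⟨s, h, ⟨⟨atil_pure_sat.mpr hA, solX_pure_sat.mpr hX⟩, ?_⟩⟩
    exact hsp
  · -- entailment
    intro s h hsat
    obtain ⟨⟨hA', hX'⟩, hsp⟩ := hsat
    have hA := atil_pure_sat.mp hA'
    have hX := solX_pure_sat.mp hX'
    refine ⟨⟨btil_pure_sat.mpr ⟨?_, ?_⟩, trivial⟩, ?_⟩
    · intro i
      have := hA i
      omega
    · intro j
      have haj := hX j
      have h1 := hoffk j
      have h0 : s 0 ≤ s (f j).1 := smono hA 0 (f j).1 (by omega) (by have := (f j).2; omega)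
      have hstep : s ((f j).1 + 1) = s (f j).1 + (B+1) := hA (f j)
      have hm : s ((f j).1 + 1) ≤ s m := smono hA ((f j).1+1) m (by have := (f j).2; omega) le_rfl
      omega
    · refine ⟨h, ∅, ?_, (Finmap.union_empty).symm, hsp, rfl⟩
      intro x _ hx
      exact absurd hx Finmap.notMem_empty
end Backward

/-- Reduction of 3-partition to biabduction: the biabduction problem
`(Ã_{B,S}, B̃_{B,S})` has a solution iff there is a complete 3-partition of `S`
w.r.t. `B`. -/
theorem stmt_12 (m B : ℕ) (k : Fin (3 * m) → ℕ)
    (hsum : ∑ j, k j = m * B)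
    (hbound : ∀ j, B < 4 * k j ∧ 2 * k j < B) :
    HasBiabductionSolution (heapAtil m B) (heapBtil m k) ↔ HasThreePartition m B k :=
  ⟨forward_dir hsum hbound, backward_dir hsum hbound⟩
end

section
/- Let A, B be ↦-free symbolic heaps with spatial parts ⊛_{i=1}^n array(a_i,b_i) and ⊛_{j=1}^m array(c_j,d_j), and write φ(A,B) = ∃x. α(x) where α(x) = ⋁_{i=1}^{n} (a_i ≤ x ≤ b_i) ∧ ⋀_{j=1}^{m} (x < c_j ∨ x > d_j). Then φ(A,B) is logically equivalent over ℕ to the quantifier-free formula ⋁_{i_0=1}^{n} α(a_{i_0}) ∨ ⋁_{j_0=1}^{m} α(d_{j_0} + 1): every stack satisfies φ(A,B) iff it satisfies this disjunction. -/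
/-- `α(x)` for `↦`-free `A`, `B` with arrays `array(aᵢ,bᵢ)` and `array(cⱼ,dⱼ)`:
`⋁ᵢ (aᵢ ≤ x ≤ bᵢ) ∧ ⋀ⱼ (x < cⱼ ∨ x > dⱼ)`, evaluated under stack `s`. -/
def alphaSat (n m : ℕ) (a b : Fin n → Trm) (c d : Fin m → Trm)
    (s : Stack) (x : ℕ) : Prop :=
  (∃ i : Fin n, Trm.eval s (a i) ≤ x ∧ x ≤ Trm.eval s (b i)) ∧
  ∀ j : Fin m, x < Trm.eval s (c j) ∨ x > Trm.eval s (d j)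

/-- Lemma (quantifier elimination for φ): `φ(A,B) = ∃x. α(x)` is logically
equivalent over ℕ to `⋁_{i₀} α(a_{i₀}) ∨ ⋁_{j₀} α(d_{j₀} + 1)`. -/
theorem stmt_16 (n m : ℕ) (a b : Fin n → Trm) (c d : Fin m → Trm) (s : Stack) :
    (∃ x : ℕ, alphaSat n m a b c d s x) ↔
    ((∃ i₀ : Fin n, alphaSat n m a b c d s (Trm.eval s (a i₀))) ∨
      (∃ j₀ : Fin m, alphaSat n m a b c d s (Trm.eval s (d j₀) + 1))) := by
  constructor
  · rintro hx
    classical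
    -- take the least x satisfying α
    obtain ⟨x, hx, hmin⟩ : ∃ x, alphaSat n m a b c d s x ∧
        ∀ y, alphaSat n m a b c d s y → x ≤ y :=
      ⟨Nat.find hx, Nat.find_spec hx, fun y hy => Nat.find_le hy⟩
    obtain ⟨⟨i, hai, hbi⟩, hall⟩ := hx
    rcases eq_or_lt_of_le hai with heq | hlt
    · refine Or.inl ⟨i, ?_⟩
      rw [heq]
      exact ⟨⟨i, hai, hbi⟩, hall⟩
    · have hx1 : ¬ alphaSat n m a b c d s (x - 1) := fun h => by
        have := hmin _ h
        omega
      have hx1' : ∃ j : Fin m, Trm.eval s (c j) ≤ x - 1 ∧ x - 1 ≤ Trm.eval s (d j) := by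
        by_contra hc
        push_neg at hc
        exact hx1 ⟨⟨i, by omega, by omega⟩, fun j => by have := hc j; omega⟩
      obtain ⟨j, hcj, hdj⟩ := hx1'
      have hj := hall j
      have hxd : x = Trm.eval s (d j) + 1 := by omega
      refine Or.inr ⟨j, ?_⟩
      rw [← hxd]
      exact ⟨⟨i, hai, hbi⟩, hall⟩
  · rintro (⟨i, h⟩ | ⟨j, h⟩)
    exacts [⟨_, h⟩, ⟨_, h⟩]
end

section
/- Let A = Π : ⊛_{i=1}^n array(a_i,b_i) * ⊛_{i=1}^k (t_i ↦ u_i) be quantifier-free and B = ∃z⃗. Π' : ⊛_{j=1}^m array(c_j,d_j) * ⊛_{j=1}^ℓ (v_j ↦ w_j), where the bound variables z⃗ are disjoint from all variables of A and no variable w_j on the right-hand side of a points-to in B is among z⃗. Then for every stack s: s ⊨ χ(A,B) if and only if there exists a heap h with s,h ⊨ A and s,h ⊭ B. -/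
/-! ## Auxiliary infrastructure -/

section Aux

/-- Evaluation only depends on the variables of the term. -/
theorem Trm.eval_congr {s s' : Stack} : ∀ {t : Trm}, (∀ x ∈ t.vars, s' x = s x) →
    t.eval s' = t.eval s
  | .var x, h => h x rfl
  | .const n, _ => rfl
  | .add t u, h => by
      simp only [Trm.eval, Trm.eval_congr (fun x hx => h x (Or.inl hx)),
        Trm.eval_congr (fun x hx => h x (Or.inr hx))]
  | .smul n t, h => by
      simp only [Trm.eval, Trm.eval_congr (t := t) (fun x hx => h x hx)]

theorem absArrays_vars {F : Spatial} : ∀ p ∈ F.absArrays,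
    p.1.vars ⊆ F.vars ∧ p.2.vars ⊆ F.vars := by
  induction F with
  | emp => simp [Spatial.absArrays]
  | pto t u => simp only [Spatial.absArrays, List.mem_singleton, Spatial.vars]
               rintro p rfl
               exact ⟨Set.subset_union_left, Set.subset_union_left⟩
  | arr t u => simp only [Spatial.absArrays, List.mem_singleton, Spatial.vars]
               rintro p rfl
               exact ⟨Set.subset_union_left, Set.subset_union_right⟩
  | star F G ihF ihG =>
      intro p hp
      simp only [Spatial.absArrays, List.mem_append] at hp
      rcases hp with hp | hp
      · exact ⟨(ihF p hp).1.trans Set.subset_union_left,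
          (ihF p hp).2.trans Set.subset_union_left⟩
      · exact ⟨(ihG p hp).1.trans Set.subset_union_right,
          (ihG p hp).2.trans Set.subset_union_right⟩

theorem ptos_vars {F : Spatial} : ∀ p ∈ F.ptos,
    p.1.vars ⊆ F.vars ∧ p.2.vars ⊆ F.vars := by
  induction F with
  | emp => simp [Spatial.ptos]
  | pto t u => simp only [Spatial.ptos, List.mem_singleton, Spatial.vars]
               rintro p rfl
               exact ⟨Set.subset_union_left, Set.subset_union_right⟩
  | arr t u => simp [Spatial.ptos]
  | star F G ihF ihG =>
      intro p hp
      simp only [Spatial.ptos, List.mem_append] at hp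
      rcases hp with hp | hp
      · exact ⟨(ihF p hp).1.trans Set.subset_union_left,
          (ihF p hp).2.trans Set.subset_union_left⟩
      · exact ⟨(ihG p hp).1.trans Set.subset_union_right,
          (ihG p hp).2.trans Set.subset_union_right⟩

theorem arrs_mem_abs {F : Spatial} : ∀ p ∈ F.arrs, p ∈ F.absArrays := by
  induction F with
  | emp => simp [Spatial.arrs]
  | pto t u => simp [Spatial.arrs]
  | arr t u => simp [Spatial.arrs, Spatial.absArrays]
  | star F G ihF ihG =>
      intro p hp
      simp only [Spatial.arrs, Spatial.absArrays, List.mem_append] at hp ⊢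
      exact hp.imp (ihF p) (ihG p)

theorem pto_diag_mem_abs {F : Spatial} : ∀ p ∈ F.ptos, (p.1, p.1) ∈ F.absArrays := by
  induction F with
  | emp => simp [Spatial.ptos]
  | pto t u => simp [Spatial.ptos, Spatial.absArrays]
  | arr t u => simp [Spatial.ptos]
  | star F G ihF ihG =>
      intro p hp
      simp only [Spatial.ptos, Spatial.absArrays, List.mem_append] at hp ⊢
      exact hp.imp (ihF p) (ihG p)

theorem absArr_cases {F : Spatial} : ∀ q ∈ F.absArrays,
    q ∈ F.arrs ∨ ∃ u, (q.1, u) ∈ F.ptos ∧ q.2 = q.1 := by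
  induction F with
  | emp => simp [Spatial.absArrays]
  | pto t u => intro q hq; simp only [Spatial.absArrays, List.mem_singleton] at hq
               subst hq; exact Or.inr ⟨u, by simp [Spatial.ptos]⟩
  | arr t u => intro q hq; simp only [Spatial.absArrays, List.mem_singleton] at hq
               subst hq; exact Or.inl (by simp [Spatial.arrs])
  | star F G ihF ihG =>
      intro q hq
      simp only [Spatial.absArrays, Spatial.arrs, Spatial.ptos, List.mem_append] at hq ⊢
      rcases hq with hq | hq
      · rcases ihF q hq with h | ⟨u, hu, he⟩
        · exact Or.inl (Or.inl h)
        · exact Or.inr ⟨u, Or.inl hu, he⟩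
      · rcases ihG q hq with h | ⟨u, hu, he⟩
        · exact Or.inl (Or.inr h)
        · exact Or.inr ⟨u, Or.inr hu, he⟩

theorem diag_sublist (F : Spatial) :
    (F.ptos.map fun p => (p.1, p.1)).Sublist F.absArrays := by
  induction F with
  | emp => simp [Spatial.ptos, Spatial.absArrays]
  | pto t u => simp [Spatial.ptos, Spatial.absArrays]
  | arr t u => simp [Spatial.ptos, Spatial.absArrays]
  | star F G ihF ihG =>
      simp only [Spatial.ptos, Spatial.absArrays, List.map_append]
      exact ihF.append ihG

/-- The interval-disjointness relation used in `gammaSat`. -/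
def IntvDisj (st : Stack) (p q : Trm × Trm) : Prop :=
  Trm.eval st p.2 < Trm.eval st q.1 ∨ Trm.eval st q.2 < Trm.eval st p.1

theorem cross_arr_pto {st : Stack} {F : Spatial}
    (hpw : F.absArrays.Pairwise (IntvDisj st)) :
    ∀ a ∈ F.arrs, ∀ q ∈ F.ptos, IntvDisj st a (q.1, q.1) := by
  induction F with
  | emp => simp [Spatial.arrs]
  | pto t u => simp [Spatial.arrs]
  | arr t u => simp [Spatial.ptos]
  | star F G ihF ihG =>
      simp only [Spatial.absArrays, List.pairwise_append] at hpw
      obtain ⟨pw1, pw2, hcr⟩ := hpw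
      intro a ha q hq
      simp only [Spatial.arrs, Spatial.ptos, List.mem_append] at ha hq
      rcases ha with ha | ha <;> rcases hq with hq | hq
      · exact ihF pw1 a ha q hq
      · exact hcr a (arrs_mem_abs a ha) _ (pto_diag_mem_abs q hq)
      · exact Or.symm (hcr _ (pto_diag_mem_abs q hq) a (arrs_mem_abs a ha))
      · exact ihG pw2 a ha q hq

end Aux
section HeapInfra

/-- Build a heap from a list of keys and a value function. -/
def mkHeapL (f : ℕ → ℕ) : List ℕ → Heap
  | [] => ∅
  | k :: l => (mkHeapL f l).insert k (f k)

theorem lookup_mkHeapL (f : ℕ → ℕ) (l : List ℕ) (a : ℕ) :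
    (mkHeapL f l).lookup a = if a ∈ l then some (f a) else none := by
  induction l with
  | nil => simp [mkHeapL, Finmap.lookup_empty]
  | cons k l ih =>
      by_cases h : a = k
      · subst h; simp [mkHeapL, Finmap.lookup_insert]
      · simp only [mkHeapL, Finmap.lookup_insert_of_ne _ h, ih, List.mem_cons]
        simp [h]

theorem mem_mkHeapL {f : ℕ → ℕ} {l : List ℕ} {a : ℕ} :
    a ∈ mkHeapL f l ↔ a ∈ l := by
  rw [Finmap.mem_iff]
  rw [lookup_mkHeapL]
  by_cases h : a ∈ l <;> simp [h]

/-- Build a heap with key set `S` and value function `f`. -/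
noncomputable def mkHeap (S : Finset ℕ) (f : ℕ → ℕ) : Heap := mkHeapL f S.toList

theorem lookup_mkHeap (S : Finset ℕ) (f : ℕ → ℕ) (a : ℕ) :
    (mkHeap S f).lookup a = if a ∈ S then some (f a) else none := by
  rw [mkHeap, lookup_mkHeapL]
  simp [Finset.mem_toList]

theorem mem_mkHeap {S : Finset ℕ} {f : ℕ → ℕ} {a : ℕ} :
    a ∈ mkHeap S f ↔ a ∈ S := by
  rw [mkHeap, mem_mkHeapL, Finset.mem_toList]

theorem keys_mkHeap (S : Finset ℕ) (f : ℕ → ℕ) : (mkHeap S f).keys = S := by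
  ext a; rw [Finmap.mem_keys, mem_mkHeap]

theorem keys_eq_empty_iff {h : Heap} : h.keys = ∅ ↔ h = ∅ := by
  constructor
  · intro hk
    apply Finmap.ext_lookup
    intro x
    rw [Finmap.lookup_empty, Finmap.lookup_eq_none]
    intro hx
    rw [← Finmap.mem_keys, hk] at hx
    exact absurd hx (Finset.notMem_empty x)
  · rintro rfl; exact Finmap.keys_empty

/-- Union of the closed intervals denoted by a list of term pairs. -/
def keysOf (st : Stack) (l : List (Trm × Trm)) : Finset ℕ :=
  l.foldr (fun p acc => Finset.Icc (Trm.eval st p.1) (Trm.eval st p.2) ∪ acc) ∅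

theorem mem_keysOf {st : Stack} {l : List (Trm × Trm)} {k : ℕ} :
    k ∈ keysOf st l ↔ ∃ p ∈ l, Trm.eval st p.1 ≤ k ∧ k ≤ Trm.eval st p.2 := by
  induction l with
  | nil => simp [keysOf]
  | cons p l ih =>
      simp [keysOf, Finset.mem_union, Finset.mem_Icc] at *
      rw [ih]

theorem keysOf_append (st : Stack) (l₁ l₂ : List (Trm × Trm)) :
    keysOf st (l₁ ++ l₂) = keysOf st l₁ ∪ keysOf st l₂ := by
  induction l₁ with
  | nil => simp [keysOf]
  | cons p l ih =>
      simp only [keysOf, List.foldr_cons, List.cons_append, List.foldr_append] at *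
      rw [ih, ← Finset.union_assoc]

/-- Flat characterization of spatial satisfaction. -/
def Flat (st : Stack) (F : Spatial) (h : Heap) : Prop :=
  (∀ p ∈ F.absArrays, Trm.eval st p.1 ≤ Trm.eval st p.2) ∧
  F.absArrays.Pairwise (IntvDisj st) ∧
  h.keys = keysOf st F.absArrays ∧
  (∀ p ∈ F.ptos, h.lookup (Trm.eval st p.1) = some (Trm.eval st p.2))

end HeapInfra
section FlatIff

theorem Flat.of_sat {st : Stack} {F : Spatial} : ∀ {h : Heap}, F.sat st h → Flat st F h := by
  induction F with
  | emp =>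
      intro h hs
      simp only [Spatial.sat] at hs
      subst hs
      exact ⟨by simp [Spatial.absArrays], by simp [Spatial.absArrays],
        by simp [Spatial.absArrays, keysOf, Finmap.keys_empty], by simp [Spatial.ptos]⟩
  | pto t u =>
      intro h hs
      simp only [Spatial.sat] at hs
      refine ⟨by simp [Spatial.absArrays], by simp [Spatial.absArrays], ?_, ?_⟩
      · simp [Spatial.absArrays, keysOf, hs.1, Finset.Icc_self]
      · intro p hp
        simp only [Spatial.ptos, List.mem_singleton] at hp
        subst hp
        exact hs.2
  | arr t u =>
      intro h hs
      simp only [Spatial.sat] at hs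
      refine ⟨?_, by simp [Spatial.absArrays], ?_, by simp [Spatial.ptos]⟩
      · intro p hp
        simp only [Spatial.absArrays, List.mem_singleton] at hp
        subst hp
        exact hs.1
      · simp [Spatial.absArrays, keysOf, hs.2]
  | star F G ihF ihG =>
      intro h hs
      obtain ⟨h₁, h₂, hd, rfl, hF, hG⟩ := hs
      obtain ⟨w1, pw1, k1, p1⟩ := ihF hF
      obtain ⟨w2, pw2, k2, p2⟩ := ihG hG
      have cross : ∀ p ∈ F.absArrays, ∀ q ∈ G.absArrays, IntvDisj st p q := by
        intro p hp q hq
        by_contra hc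
        unfold IntvDisj at hc
        push_neg at hc
        obtain ⟨hc1, hc2⟩ := hc
        set x := max (Trm.eval st p.1) (Trm.eval st q.1) with hxdef
        have hx1 : x ∈ h₁ := by
          rw [← Finmap.mem_keys, k1, mem_keysOf]
          exact ⟨p, hp, le_max_left _ _, max_le (w1 p hp) hc1⟩
        have hx2 : x ∈ h₂ := by
          rw [← Finmap.mem_keys, k2, mem_keysOf]
          exact ⟨q, hq, le_max_right _ _, max_le hc2 (w2 q hq)⟩
        exact hd x hx1 hx2
      refine ⟨?_, ?_, ?_, ?_⟩
      · intro p hp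
        simp only [Spatial.absArrays, List.mem_append] at hp
        exact hp.elim (w1 p) (w2 p)
      · simp only [Spatial.absArrays]
        exact List.pairwise_append.mpr ⟨pw1, pw2, cross⟩
      · simp only [Spatial.absArrays]
        rw [Finmap.keys_union, keysOf_append, k1, k2]
      · intro p hp
        simp only [Spatial.ptos, List.mem_append] at hp
        rcases hp with hp | hp
        · have hm : Trm.eval st p.1 ∈ h₁ := Finmap.mem_iff.mpr ⟨_, p1 p hp⟩
          rw [Finmap.lookup_union_left hm]
          exact p1 p hp
        · have hm : Trm.eval st p.1 ∈ h₂ := Finmap.mem_iff.mpr ⟨_, p2 p hp⟩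
          rw [Finmap.lookup_union_right (Finmap.Disjoint.symm _ _ hd _ hm)]
          exact p2 p hp

theorem Flat.to_sat {st : Stack} {F : Spatial} : ∀ {h : Heap}, Flat st F h → F.sat st h := by
  induction F with
  | emp =>
      intro h hf
      have hk := hf.2.2.1
      simp only [Spatial.absArrays, keysOf, List.foldr_nil] at hk
      simpa [Spatial.sat] using keys_eq_empty_iff.mp hk
  | pto t u =>
      intro h hf
      obtain ⟨-, -, hk, hp⟩ := hf
      simp only [Spatial.absArrays, keysOf, List.foldr_cons, List.foldr_nil,
        Finset.union_empty, Finset.Icc_self] at hk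
      refine ⟨hk, ?_⟩
      exact hp (t, u) (by simp [Spatial.ptos])
  | arr t u =>
      intro h hf
      obtain ⟨w, -, hk, -⟩ := hf
      simp only [Spatial.absArrays, keysOf, List.foldr_cons, List.foldr_nil,
        Finset.union_empty] at hk
      exact ⟨w (t, u) (by simp [Spatial.absArrays]), hk⟩
  | star F G ihF ihG =>
      intro h hf
      obtain ⟨w, pw, hk, hp⟩ := hf
      simp only [Spatial.absArrays, Spatial.ptos] at w pw hk hp
      rw [List.pairwise_append] at pw
      obtain ⟨pw1, pw2, cross⟩ := pw
      set S₁ := keysOf st F.absArrays with hS1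
      set S₂ := keysOf st G.absArrays with hS2
      have hSdisj : ∀ x, x ∈ S₁ → x ∉ S₂ := by
        intro x hx1 hx2
        rw [hS1, mem_keysOf] at hx1
        rw [hS2, mem_keysOf] at hx2
        obtain ⟨p, hp1, hpa, hpb⟩ := hx1
        obtain ⟨q, hq1, hqa, hqb⟩ := hx2
        rcases cross p hp1 q hq1 with hlt | hlt <;> omega
      set f : ℕ → ℕ := fun k => (h.lookup k).getD 0 with hfdef
      have hkeys : h.keys = S₁ ∪ S₂ := by rw [hk, keysOf_append]
      have hlook : ∀ x ∈ S₁ ∪ S₂, h.lookup x = some (f x) := by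
        intro x hx
        have hxm : x ∈ h := by rw [← Finmap.mem_keys, hkeys]; exact hx
        obtain ⟨v, hv⟩ := Finmap.mem_iff.mp hxm
        simp [hfdef, hv]
      refine ⟨mkHeap S₁ f, mkHeap S₂ f, ?_, ?_, ihF ?_, ihG ?_⟩
      · intro x hx1 hx2
        exact hSdisj x (mem_mkHeap.mp hx1) (mem_mkHeap.mp hx2)
      · apply Finmap.ext_lookup
        intro x
        by_cases hx1 : x ∈ S₁
        · rw [Finmap.lookup_union_left (mem_mkHeap.mpr hx1), lookup_mkHeap, if_pos hx1,
            hlook x (Finset.mem_union_left _ hx1)]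
        · rw [Finmap.lookup_union_right (fun hc => hx1 (mem_mkHeap.mp hc)), lookup_mkHeap]
          by_cases hx2 : x ∈ S₂
          · rw [if_pos hx2, hlook x (Finset.mem_union_right _ hx2)]
          · rw [if_neg hx2, Finmap.lookup_eq_none]
            intro hc
            rw [← Finmap.mem_keys, hkeys, Finset.mem_union] at hc
            tauto
      · refine ⟨fun p hp' => w p (List.mem_append_left _ hp'), pw1, keys_mkHeap _ _, ?_⟩
        intro p hp'
        have hm : Trm.eval st p.1 ∈ S₁ := by
          rw [hS1, mem_keysOf]
          exact ⟨(p.1, p.1), pto_diag_mem_abs p hp', le_refl _, le_refl _⟩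
        rw [lookup_mkHeap, if_pos hm]
        have := hp p (List.mem_append_left _ hp')
        simp [hfdef, this]
      · refine ⟨fun p hp' => w p (List.mem_append_right _ hp'), pw2, keys_mkHeap _ _, ?_⟩
        intro p hp'
        have hm : Trm.eval st p.1 ∈ S₂ := by
          rw [hS2, mem_keysOf]
          exact ⟨(p.1, p.1), pto_diag_mem_abs p hp', le_refl _, le_refl _⟩
        rw [lookup_mkHeap, if_pos hm]
        have := hp p (List.mem_append_right _ hp')
        simp [hfdef, this]

theorem sat_iff_flat (st : Stack) (F : Spatial) (h : Heap) : F.sat st h ↔ Flat st F h :=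
  ⟨Flat.of_sat, Flat.to_sat⟩

theorem symHeap_sat_iff (st : Stack) (A : SymHeap) (h : Heap) :
    A.sat st h ↔ A.pure.sat st ∧ Flat st A.spatial h := by
  unfold SymHeap.sat
  rw [sat_iff_flat]

theorem gammaSat_iff (A : SymHeap) (st : Stack) :
    gammaSat A st ↔ A.pure.sat st ∧
      (∀ p ∈ A.spatial.absArrays, Trm.eval st p.1 ≤ Trm.eval st p.2) ∧
      A.spatial.absArrays.Pairwise (IntvDisj st) :=
  Iff.rfl

end FlatIff
section Canonical

/-- Value function of the canonical heap: pointer values at pointer addresses,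
default `d` elsewhere. -/
def ptoVal (st : Stack) (l : List (Trm × Trm)) (d k : ℕ) : ℕ :=
  match l.find? (fun p => Trm.eval st p.1 == k) with
  | some p => Trm.eval st p.2
  | none => d

theorem ptos_addr_pairwise {st : Stack} {F : Spatial}
    (hpw : F.absArrays.Pairwise (IntvDisj st)) :
    F.ptos.Pairwise (fun p q => Trm.eval st p.1 ≠ Trm.eval st q.1) := by
  have h1 : (F.ptos.map fun p => (p.1, p.1)).Pairwise (IntvDisj st) :=
    List.Pairwise.sublist (diag_sublist F) hpw
  rw [List.pairwise_map] at h1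
  exact h1.imp (fun hd => by unfold IntvDisj at hd; simp only at hd; omega)

theorem ptoVal_eq {st : Stack} {F : Spatial} {d : ℕ}
    (hpw : F.absArrays.Pairwise (IntvDisj st)) {p : Trm × Trm} (hp : p ∈ F.ptos) :
    ptoVal st F.ptos d (Trm.eval st p.1) = Trm.eval st p.2 := by
  unfold ptoVal
  cases hfind : F.ptos.find? (fun q => Trm.eval st q.1 == Trm.eval st p.1) with
  | none =>
      exact absurd (List.find?_eq_none.mp hfind p hp) (by simp)
  | some q =>
      have hq1 : Trm.eval st q.1 = Trm.eval st p.1 := by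
        simpa using List.find?_some hfind
      have hqm : q ∈ F.ptos := List.mem_of_find?_eq_some hfind
      have hpair := ptos_addr_pairwise hpw
      have hsym : Symmetric (fun p q : Trm × Trm => Trm.eval st p.1 ≠ Trm.eval st q.1) :=
        fun _ _ h => h.symm
      have hpq : p = q := by
        by_contra hne
        haveI : Std.Symm (fun p q : Trm × Trm => Trm.eval st p.1 ≠ Trm.eval st q.1) := ⟨hsym⟩
        exact hpair.forall hp hqm hne hq1.symm
      rw [hpq]

theorem ptoVal_default {st : Stack} {F : Spatial} {d k : ℕ}
    (hpw : F.absArrays.Pairwise (IntvDisj st)) {a : Trm × Trm} (ha : a ∈ F.arrs)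
    (h1 : Trm.eval st a.1 ≤ k) (h2 : k ≤ Trm.eval st a.2) :
    ptoVal st F.ptos d k = d := by
  unfold ptoVal
  have hfind : F.ptos.find? (fun p => Trm.eval st p.1 == k) = none := by
    rw [List.find?_eq_none]
    intro q hq hc
    have hqk : Trm.eval st q.1 = k := by simpa using hc
    have := cross_arr_pto hpw a ha q hq
    unfold IntvDisj at this
    simp only at this
    omega
  rw [hfind]

theorem le_foldr_max {l : List ℕ} {x : ℕ} (hx : x ∈ l) : x ≤ l.foldr max 0 := by
  induction l with
  | nil => simp at hx
  | cons a l ih =>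
      rcases List.mem_cons.mp hx with rfl | hm
      · exact le_max_left _ _
      · exact (ih hm).trans (le_max_right _ _)

end Canonical

/-- Lemma (χ): let `A` be quantifier-free and `B = ∃z⃗. Q`, with `z⃗` disjoint
from the variables of `A` and no right-hand side variable of a points-to in `Q`
among `z⃗`. Then for every stack `s`: `s ⊨ χ(A,B)` iff there is a heap `h` with
`s,h ⊨ A` and `s,h ⊭ B`. -/
theorem stmt_17 (A : SymHeap) (zs : List ℕ) (Q : SymHeap)
    (hzA : ∀ z ∈ zs, z ∉ A.vars)
    (hw : ∀ p ∈ Q.spatial.ptos, ∀ z ∈ zs, z ∉ Trm.vars p.2)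
    (s : Stack) :
    chiSat A zs Q s ↔ ∃ h : Heap, A.sat s h ∧ ¬ QSymHeap.sat s h ⟨zs, Q⟩ := by
  classical
  -- evaluation of A-terms is stable under stack extensions on `zs`
  have hstA : ∀ (s' : Stack), (∀ x, x ∉ zs → s' x = s x) →
      ∀ {t : Trm}, t.vars ⊆ A.spatial.vars → Trm.eval s' t = Trm.eval s t := by
    intro s' hs' t ht
    apply Trm.eval_congr
    intro x hx
    apply hs'
    intro hz
    exact hzA x hz (Set.mem_union_right _ (ht hx))
  have hsp : ∀ (s' : Stack), (∀ x, x ∉ zs → s' x = s x) →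
      ∀ p ∈ A.spatial.absArrays,
        Trm.eval s' p.1 = Trm.eval s p.1 ∧ Trm.eval s' p.2 = Trm.eval s p.2 := by
    intro s' hs' p hp
    exact ⟨hstA s' hs' (absArrays_vars p hp).1, hstA s' hs' (absArrays_vars p hp).2⟩
  have hptA : ∀ (s' : Stack), (∀ x, x ∉ zs → s' x = s x) →
      ∀ p ∈ A.spatial.ptos,
        Trm.eval s' p.1 = Trm.eval s p.1 ∧ Trm.eval s' p.2 = Trm.eval s p.2 := by
    intro s' hs' p hp
    exact ⟨hstA s' hs' (ptos_vars p hp).1, hstA s' hs' (ptos_vars p hp).2⟩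
  have hwQ : ∀ (s' : Stack), (∀ x, x ∉ zs → s' x = s x) →
      ∀ q ∈ Q.spatial.ptos, Trm.eval s' q.2 = Trm.eval s q.2 := by
    intro s' hs' q hq
    apply Trm.eval_congr
    intro x hx
    apply hs'
    intro hz
    exact hw q hq x hz hx
  constructor
  · -- forward direction
    rintro ⟨hγ, hall⟩
    rw [gammaSat_iff] at hγ
    obtain ⟨hpure, hwd, hpw⟩ := hγ
    set M := (Q.spatial.ptos.map fun p => Trm.eval s p.2).foldr max 0 with hM
    set f := ptoVal s A.spatial.ptos (M + 1) with hf
    set h := mkHeap (keysOf s A.spatial.absArrays) f with hh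
    have hApt : ∀ p ∈ A.spatial.ptos,
        h.lookup (Trm.eval s p.1) = some (Trm.eval s p.2) := by
      intro p hp
      have hm : Trm.eval s p.1 ∈ keysOf s A.spatial.absArrays :=
        mem_keysOf.mpr ⟨(p.1, p.1), pto_diag_mem_abs p hp, le_refl _, le_refl _⟩
      rw [hh, lookup_mkHeap, if_pos hm, hf, ptoVal_eq hpw hp]
    have hAsat : A.sat s h := by
      rw [symHeap_sat_iff]
      exact ⟨hpure, hwd, hpw, keys_mkHeap _ _, hApt⟩
    refine ⟨h, hAsat, ?_⟩
    rintro ⟨s', hs', hQs⟩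
    rw [symHeap_sat_iff] at hQs
    obtain ⟨hQp, hQw, hQpw, hQk, hQpt⟩ := hQs
    have hγQ : gammaSat Q s' := (gammaSat_iff Q s').mpr ⟨hQp, hQw, hQpw⟩
    have hhk : h.keys = keysOf s A.spatial.absArrays := by rw [hh, keys_mkHeap]
    rcases hall s' hs' with hng | hφ1 | hφ2 | hψ1 | hψ2
    · exact hng hγQ
    · obtain ⟨x, ⟨p, hp, hx1, hx2⟩, hout⟩ := hφ1
      have hpe := hsp s' hs' p hp
      have hxk : x ∈ h.keys := by
        rw [hhk, mem_keysOf]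
        exact ⟨p, hp, by omega, by omega⟩
      rw [hQk, mem_keysOf] at hxk
      obtain ⟨q, hq, hq1, hq2⟩ := hxk
      rcases hout q hq with h' | h' <;> omega
    · obtain ⟨x, ⟨q, hq, hx1, hx2⟩, hout⟩ := hφ2
      have hxk : x ∈ h.keys := by rw [hQk, mem_keysOf]; exact ⟨q, hq, hx1, hx2⟩
      rw [hhk, mem_keysOf] at hxk
      obtain ⟨p, hp, hp1, hp2⟩ := hxk
      have hpe := hsp s' hs' p hp
      rcases hout p hp with h' | h' <;> omega
    · obtain ⟨a, ha, q, hq, h1, h2⟩ := hψ1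
      have hae := hsp s' hs' a (arrs_mem_abs a ha)
      have hkm : Trm.eval s' q.1 ∈ keysOf s A.spatial.absArrays :=
        mem_keysOf.mpr ⟨a, arrs_mem_abs a ha, by omega, by omega⟩
      have hlv : h.lookup (Trm.eval s' q.1) = some (M + 1) := by
        rw [hh, lookup_mkHeap, if_pos hkm, hf,
          ptoVal_default hpw ha (by omega) (by omega)]
      have hqv := hQpt q hq
      rw [hlv] at hqv
      have hde : Trm.eval s' q.2 = M + 1 := (Option.some.inj hqv).symm
      have hqe : Trm.eval s' q.2 = Trm.eval s q.2 := hwQ s' hs' q hq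
      have hle : Trm.eval s q.2 ≤ M := le_foldr_max (List.mem_map_of_mem hq)
      omega
    · obtain ⟨p, hp, q, hq, h1, h2⟩ := hψ2
      have hpe := hptA s' hs' p hp
      have hqv := hQpt q hq
      have hlp := hApt p hp
      rw [← h1, hpe.1, hlp] at hqv
      exact h2 (by rw [hpe.2, Option.some.inj hqv])
  · -- backward direction
    rintro ⟨h, hA, hnB⟩
    rw [symHeap_sat_iff] at hA
    obtain ⟨hpure, ⟨hwd, hpw, hk, hpt⟩⟩ := hA
    refine ⟨(gammaSat_iff A s).mpr ⟨hpure, hwd, hpw⟩, ?_⟩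
    intro s' hs'
    by_contra hcon
    push_neg at hcon
    obtain ⟨hγQ', hnφ1, hnφ2, hnψ1, hnψ2⟩ := hcon
    rw [gammaSat_iff] at hγQ'
    obtain ⟨hQp, hQw, hQpw⟩ := hγQ'
    unfold phiSat at hnφ1 hnφ2
    push_neg at hnφ1 hnφ2
    unfold psi1Sat at hnψ1
    push_neg at hnψ1
    unfold psi2Sat at hnψ2
    push_neg at hnψ2
    apply hnB
    refine ⟨s', hs', ?_⟩
    rw [symHeap_sat_iff]
    refine ⟨hQp, hQw, hQpw, ?_, ?_⟩
    · -- key set of h equals the abstraction of Q under s'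
      apply Finset.ext
      intro k
      rw [hk, mem_keysOf, mem_keysOf]
      constructor
      · rintro ⟨p, hp, h1, h2⟩
        have hpe := hsp s' hs' p hp
        obtain ⟨q, hq, hq1, hq2⟩ := hnφ1 k ⟨p, hp, by omega, by omega⟩
        exact ⟨q, hq, hq1, hq2⟩
      · rintro ⟨q, hq, h1, h2⟩
        obtain ⟨p, hp, hp1, hp2⟩ := hnφ2 k ⟨q, hq, h1, h2⟩
        have hpe := hsp s' hs' p hp
        exact ⟨p, hp, by omega, by omega⟩
    · -- pointer lookups of Q under s'
      intro q hq
      have hkm : Trm.eval s' q.1 ∈ h.keys := by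
        rw [hk, mem_keysOf]
        obtain ⟨p, hp, hp1, hp2⟩ := hnφ2 (Trm.eval s' q.1)
          ⟨(q.1, q.1), pto_diag_mem_abs q hq, le_refl _, le_refl _⟩
        have hpe := hsp s' hs' p hp
        exact ⟨p, hp, by omega, by omega⟩
      rw [hk, mem_keysOf] at hkm
      obtain ⟨p, hp, hp1, hp2⟩ := hkm
      have hpe := hsp s' hs' p hp
      rcases absArr_cases p hp with har | ⟨u, hu, hdiag⟩
      · exfalso
        have := hnψ1 p har q hq (by omega)
        omega
      · have hd2 : Trm.eval s p.2 = Trm.eval s p.1 := by rw [hdiag]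
        have hue := hptA s' hs' (p.1, u) hu
        have haddr : Trm.eval s' p.1 = Trm.eval s' q.1 := by
          have := hpe.1; have := hpe.2; omega
        have hval : Trm.eval s' u = Trm.eval s' q.2 := hnψ2 (p.1, u) hu q hq haddr
        calc h.lookup (Trm.eval s' q.1) = h.lookup (Trm.eval s p.1) := by
              rw [← haddr, hpe.1]
          _ = some (Trm.eval s u) := hpt (p.1, u) hu
          _ = some (Trm.eval s' q.2) := by rw [← hval, hue.2]
end
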